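/- Let α ≥ 0, D₁ > 0, λ > 0, and define B_{3/2}(t,r) = (1 + r²/(1+t))^{-3/2}. Then there exists C, D₂ > 0 such that for all t ≥ 0 and x ∈ ℝ³: ∫_{{y : |x−y| ≤ λt}} (1+t)^{-α} B_{3/2}(t,|x−y|) e^{-|y|/D₁} dy ≤ C (1+t)^{-α-3/2} e^{-3(|x|−λt)²/(2D₂(1+t))} + C e^{-3(|x|+t)/(2D₂)} + C (1+t)^{-α} B_{3/2}(t,|x|) 1_{{|x| ≤ λt}}. -/

import Mathlib

open MeasureTheory Real

noncomputable def Bprofile (k t r : ℝ) : ℝ := (1 + r ^ 2 / (1 + t)) ^ (-k)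

private lemma aux_exp_poly (c : ℝ) (hc : 0 < c) (n : ℕ) (hn : 0 < n) :
    ∃ C > 0, ∀ r : ℝ, 0 ≤ r → (1 + r) ^ n ≤ C * Real.exp (c * r) := by
  refine ⟨(max 1 ((n : ℝ) / c)) ^ n, by positivity, fun r hr => ?_⟩
  set K := max 1 ((n : ℝ) / c) with hK
  have hK1 : (1:ℝ) ≤ K := le_max_left _ _
  have hn0 : (0:ℝ) < n := by exact_mod_cast hn
  have h1 : 1 + r ≤ K * Real.exp (c * r / n) := by
    have h2 : 1 + c * r / n ≤ Real.exp (c * r / n) := by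
      linarith [Real.add_one_le_exp (c * r / n)]
    have h3 : (n : ℝ) / c * (c * r / n) = r := by field_simp
    have h4 : r ≤ K * (c * r / n) := by
      calc r = (n : ℝ) / c * (c * r / n) := h3.symm
        _ ≤ K * (c * r / n) :=
          mul_le_mul_of_nonneg_right (le_max_right _ _) (by positivity)
    nlinarith [mul_le_mul_of_nonneg_left h2 (le_trans zero_le_one hK1)]
  calc (1 + r) ^ n ≤ (K * Real.exp (c * r / n)) ^ n :=
        pow_le_pow_left₀ (by linarith) h1 n
    _ = K ^ n * (Real.exp (c * r / n)) ^ n := mul_pow _ _ _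
    _ = K ^ n * Real.exp (c * r) := by
        rw [← Real.exp_nat_mul]
        congr 1
        field_simp

private lemma Bpos {t r : ℝ} (ht : 0 ≤ t) : 0 < Bprofile (3/2) t r := by
  have : (0:ℝ) < 1 + r ^ 2 / (1 + t) := by positivity
  exact Real.rpow_pos_of_pos this _

private lemma Ble1 {t r : ℝ} (ht : 0 ≤ t) : Bprofile (3/2) t r ≤ 1 := by
  apply Real.rpow_le_one_of_one_le_of_nonpos
  · nlinarith [div_nonneg (sq_nonneg r) (by linarith : (0:ℝ) ≤ 1 + t)]
  · norm_num

private lemma Banti {t r₁ r₂ : ℝ} (ht : 0 ≤ t) (h0 : 0 ≤ r₁) (h : r₁ ≤ r₂) :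
    Bprofile (3/2) t r₂ ≤ Bprofile (3/2) t r₁ := by
  apply Real.rpow_le_rpow_of_nonpos (by positivity)
  · gcongr <;> nlinarith
  · norm_num

private lemma four_rpow : (4:ℝ) ^ ((3:ℝ)/2) = 8 := by
  rw [show (4:ℝ) = 2 ^ (2:ℕ) by norm_num, ← Real.rpow_natCast (2:ℝ) 2,
    ← Real.rpow_mul (by norm_num : (0:ℝ) ≤ 2)]
  norm_num

private lemma Bhalf {t r u : ℝ} (ht : 0 ≤ t) (hr : 0 ≤ r) (hu : r / 2 ≤ u) :
    Bprofile (3/2) t u ≤ 8 * Bprofile (3/2) t r := by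
  have h1 : Bprofile (3/2) t u ≤ Bprofile (3/2) t (r/2) := Banti ht (by linarith) hu
  refine h1.trans ?_
  have hs : (0:ℝ) < 1 + t := by linarith
  have hbase : (1 + r ^ 2 / (1 + t)) / 4 ≤ 1 + (r/2) ^ 2 / (1 + t) := by
    rw [div_le_iff₀ (by norm_num : (0:ℝ) < 4)]
    have : (r/2)^2 = r^2/4 := by ring
    rw [this]
    have h2 : r^2/4/(1+t)*4 = r^2/(1+t) := by ring
    nlinarith [div_nonneg (sq_nonneg r) hs.le]
  have hb4 : (0:ℝ) < (1 + r ^ 2 / (1 + t)) / 4 := by positivity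
  calc Bprofile (3/2) t (r/2) ≤ ((1 + r ^ 2 / (1 + t)) / 4) ^ (-(3/2) : ℝ) := by
        unfold Bprofile
        exact Real.rpow_le_rpow_of_nonpos hb4 hbase (by norm_num)
    _ = 8 * Bprofile (3/2) t r := by
        unfold Bprofile
        rw [Real.div_rpow (by positivity) (by norm_num : (0:ℝ) ≤ 4),
          Real.rpow_neg (by norm_num : (0:ℝ) ≤ 4), four_rpow]
        field_simp

private lemma Bcone {t lam : ℝ} (ht : 0 ≤ t) (hlam : 0 < lam) :
    Bprofile (3/2) t (lam * t) ≤
      (min (1/2) (lam^2/4)) ^ (-(3/2) : ℝ) * (1 + t) ^ (-(3/2) : ℝ) := by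
  set c := min (1/2) (lam^2/4) with hc
  have hc0 : 0 < c := by positivity
  have hs : (0:ℝ) < 1 + t := by linarith
  have hbase : c * (1 + t) ≤ 1 + (lam * t) ^ 2 / (1 + t) := by
    rcases le_total t 1 with h | h
    · have h1 : c ≤ 1/2 := min_le_left _ _
      have h2 : 0 ≤ (lam * t)^2 / (1 + t) := by positivity
      nlinarith
    · have h1 : c ≤ lam^2/4 := min_le_right _ _
      have h2 : lam^2/4 * (1 + t) ≤ (lam * t)^2 / (1 + t) := by
        rw [le_div_iff₀ hs]
        nlinarith [mul_nonneg (mul_nonneg (sq_nonneg lam) (sub_nonneg.mpr h))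
          (by linarith : (0:ℝ) ≤ 1 + 3*t)]
      nlinarith [mul_le_mul_of_nonneg_right h1 hs.le]
  calc Bprofile (3/2) t (lam * t) ≤ (c * (1 + t)) ^ (-(3/2) : ℝ) := by
        unfold Bprofile
        exact Real.rpow_le_rpow_of_nonpos (by positivity) hbase (by norm_num)
    _ = c ^ (-(3/2) : ℝ) * (1 + t) ^ (-(3/2) : ℝ) :=
        Real.mul_rpow hc0.le hs.le

private lemma exp_le_mul_B {t r D₁ C₁ : ℝ} (ht : 0 ≤ t) (hr : 0 ≤ r) (hD₁ : 0 < D₁)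
    (hC₁pos : 0 < C₁) (hC₁ : (1 + r) ^ 3 ≤ C₁ * Real.exp (1/(4*D₁) * r)) :
    Real.exp (-r/(4*D₁)) ≤ C₁ * Bprofile (3/2) t r := by
  have hs : (0:ℝ) < 1 + t := by linarith
  have hb0 : (0:ℝ) < 1 + r ^ 2 / (1 + t) := by positivity
  have h1 : (1 + r ^ 2 / (1 + t)) ^ ((3:ℝ)/2) ≤ (1 + r) ^ 3 := by
    have hb2 : 1 + r ^ 2 / (1 + t) ≤ (1 + r) ^ 2 := by
      have : r ^ 2 / (1 + t) ≤ r ^ 2 := by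
        apply div_le_self (sq_nonneg r) (by linarith)
      nlinarith
    calc (1 + r ^ 2 / (1 + t)) ^ ((3:ℝ)/2) ≤ ((1 + r) ^ 2) ^ ((3:ℝ)/2) :=
          Real.rpow_le_rpow hb0.le hb2 (by norm_num)
      _ = (1 + r) ^ 3 := by
          rw [← Real.rpow_natCast (1 + r) 2, ← Real.rpow_mul (by linarith),
            show ((2:ℕ):ℝ) * ((3:ℝ)/2) = ((3:ℕ):ℝ) by norm_num, Real.rpow_natCast]
  have hB : Bprofile (3/2) t r = ((1 + r ^ 2 / (1 + t)) ^ ((3:ℝ)/2))⁻¹ := by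
    unfold Bprofile
    rw [show (-(3/2) : ℝ) = -((3:ℝ)/2) by norm_num, Real.rpow_neg hb0.le]
  rw [hB, ← div_eq_mul_inv, le_div_iff₀ (by positivity)]
  calc Real.exp (-r/(4*D₁)) * (1 + r ^ 2 / (1 + t)) ^ ((3:ℝ)/2)
      ≤ Real.exp (-r/(4*D₁)) * (C₁ * Real.exp (1/(4*D₁) * r)) := by
        have := (Real.exp_pos (-r/(4*D₁))).le
        nlinarith [h1.trans hC₁]
    _ = C₁ := by
        rw [show Real.exp (-r/(4*D₁)) * (C₁ * Real.exp (1/(4*D₁) * r))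
            = C₁ * (Real.exp (-r/(4*D₁)) * Real.exp (1/(4*D₁) * r)) by ring,
          ← Real.exp_add, show -r/(4*D₁) + 1/(4*D₁) * r = 0 by ring, Real.exp_zero, mul_one]

private lemma exp_le_mul_rpow {v D C₂ : ℝ} (hv : 0 ≤ v) (hD : 0 < D)
    (hC₂ : (1 + v) ^ 4 ≤ C₂ * Real.exp (1/(2*D) * v)) :
    Real.exp (-v/(2*D)) ≤ C₂ * (1 + v) ^ (-(4:ℝ)) := by
  have h1 : ((1:ℝ) + v) ^ (-(4:ℝ)) = ((1 + v) ^ (4:ℕ))⁻¹ := by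
    rw [show (-(4:ℝ)) = -((4:ℕ):ℝ) by norm_num, Real.rpow_neg (by linarith),
      Real.rpow_natCast]
  rw [h1, ← div_eq_mul_inv, le_div_iff₀ (by positivity)]
  calc Real.exp (-v/(2*D)) * (1 + v) ^ 4
      ≤ Real.exp (-v/(2*D)) * (C₂ * Real.exp (1/(2*D) * v)) := by
        nlinarith [(Real.exp_pos (-v/(2*D))).le, hC₂]
    _ = C₂ := by
        rw [show Real.exp (-v/(2*D)) * (C₂ * Real.exp (1/(2*D) * v))
            = C₂ * (Real.exp (-v/(2*D)) * Real.exp (1/(2*D) * v)) by ring,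
          ← Real.exp_add, show -v/(2*D) + 1/(2*D) * v = 0 by ring, Real.exp_zero, mul_one]

set_option maxHeartbeats 4000000 in
theorem Bprofile_conv_exp (α D₁ lam : ℝ) (hα : 0 ≤ α) (hD₁ : 0 < D₁) (hlam : 0 < lam) :
    ∃ C > 0, ∃ D₂ > 0, ∀ t : ℝ, 0 ≤ t → ∀ x : EuclideanSpace ℝ (Fin 3),
      (∫ y in {y : EuclideanSpace ℝ (Fin 3) | ‖x - y‖ ≤ lam * t},
          (1 + t) ^ (-α) * Bprofile (3 / 2) t ‖x - y‖ * Real.exp (-‖y‖ / D₁))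
        ≤ C * (1 + t) ^ (-α - 3 / 2) *
            Real.exp (-3 * (‖x‖ - lam * t) ^ 2 / (2 * D₂ * (1 + t)))
          + C * Real.exp (-3 * (‖x‖ + t) / (2 * D₂))
          + C * (1 + t) ^ (-α) * Bprofile (3 / 2) t ‖x‖ *
              (if ‖x‖ ≤ lam * t then 1 else 0) := by
  obtain ⟨C₁, hC₁pos, hC₁⟩ := aux_exp_poly (1/(4*D₁)) (by positivity) 3 (by norm_num)
  obtain ⟨C₂, hC₂pos, hC₂⟩ := aux_exp_poly (1/(2*D₁)) (by positivity) 4 (by norm_num)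
  have hint : Integrable (fun y : EuclideanSpace ℝ (Fin 3) => (1 + ‖y‖) ^ (-(4:ℝ))) := by
    apply integrable_one_add_norm
    rw [finrank_euclideanSpace_fin]
    norm_num
  set M := ∫ y : EuclideanSpace ℝ (Fin 3), (1 + ‖y‖) ^ (-(4:ℝ)) with hM
  clear_value M
  have hM0 : 0 ≤ M := by
    rw [hM]
    exact integral_nonneg fun y => Real.rpow_nonneg (by positivity) _
  set c₀ := (min (1/2) (lam^2/4)) ^ (-(3/2) : ℝ) with hc₀
  clear_value c₀
  have hc₀0 : 0 < c₀ := by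
    rw [hc₀]; exact Real.rpow_pos_of_pos (by positivity) _
  have hM''0 : 0 < C₂ * (M + 1) := mul_pos hC₂pos (by linarith)
  refine ⟨C₂ * (M + 1) * (9 + C₁ + 8 * c₀), mul_pos hM''0 (by linarith),
    6 * D₁ * (1 + lam)^2 / lam,
    div_pos (mul_pos (mul_pos (by norm_num) hD₁) (pow_pos (by linarith) 2)) hlam,
    fun t ht x => ?_⟩
  set C := C₂ * (M + 1) * (9 + C₁ + 8 * c₀) with hCdef
  set D₂ := 6 * D₁ * (1 + lam)^2 / lam with hD₂def
  clear_value C D₂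
  have hC0 : 0 < C := by
    rw [hCdef]; exact mul_pos hM''0 (by linarith)
  have hD₂0 : 0 < D₂ := by
    rw [hD₂def]
    exact div_pos (mul_pos (mul_pos (by norm_num) hD₁) (pow_pos (by linarith) 2)) hlam
  have hF1 : 3 * D₁ ≤ D₂ := by
    rw [hD₂def, le_div_iff₀ hlam]; nlinarith [mul_pos hD₁ hlam, sq_nonneg lam, hD₁.le]
  have hF2 : 6 * D₁ * (1 + lam) ≤ D₂ * lam := by
    rw [hD₂def, div_mul_cancel₀ _ hlam.ne']; nlinarith [mul_pos hD₁ hlam, sq_nonneg lam]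
  have hF3 : 3 * D₁ * (2 + lam) ≤ D₂ := by
    rw [hD₂def, le_div_iff₀ hlam]; nlinarith [mul_pos hD₁ hlam, sq_nonneg lam, hD₁.le]
  have hs0 : (0:ℝ) < 1 + t := by linarith
  have hs1 : (1:ℝ) ≤ 1 + t := by linarith
  set r := ‖x‖ with hrdef
  clear_value r
  have hr0 : 0 ≤ r := by rw [hrdef]; exact norm_nonneg x
  set dp := max (r - lam * t) 0 with hdpdef
  clear_value dp
  have hdp0 : 0 ≤ dp := by rw [hdpdef]; exact le_max_right _ _
  have hBr : 0 < Bprofile (3/2) t r := Bpos ht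
  set Kx := (1 + t) ^ (-α) *
      (8 * Bprofile (3/2) t r * Real.exp (-dp/(2*D₁)) + Real.exp (-r/(4*D₁))) * C₂
    with hKxdef
  clear_value Kx
  have hA0 : (0:ℝ) ≤ (1 + t) ^ (-α) := Real.rpow_nonneg hs0.le _
  have hsum0 : 0 ≤ 8 * Bprofile (3/2) t r * Real.exp (-dp/(2*D₁)) + Real.exp (-r/(4*D₁)) :=
    add_nonneg (mul_nonneg (mul_nonneg (by norm_num) hBr.le) (Real.exp_pos _).le)
      (Real.exp_pos _).le
  have hKx0 : 0 ≤ Kx := by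
    rw [hKxdef]; exact mul_nonneg (mul_nonneg hA0 hsum0) hC₂pos.le
  have step1 : (∫ y in {y : EuclideanSpace ℝ (Fin 3) | ‖x - y‖ ≤ lam * t},
      (1 + t) ^ (-α) * Bprofile (3 / 2) t ‖x - y‖ * Real.exp (-‖y‖ / D₁)) ≤ Kx * M := by
    set S := {y : EuclideanSpace ℝ (Fin 3) | ‖x - y‖ ≤ lam * t} with hSdef
    have hSmeas : MeasurableSet S :=
      (isClosed_le ((continuous_const.sub continuous_id).norm) continuous_const).measurableSet
    have hBeq : ∀ u : ℝ, Bprofile (3/2) t u = (1 + u ^ 2 / (1 + t)) ^ (-(3/2):ℝ) := by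
      intro u; simp [Bprofile]
    have hf_cont : Continuous (fun y : EuclideanSpace ℝ (Fin 3) =>
        (1 + t) ^ (-α) * Bprofile (3/2) t ‖x - y‖ * Real.exp (-‖y‖ / D₁)) := by
      simp only [hBeq]
      apply Continuous.mul
      · apply Continuous.mul continuous_const
        apply Continuous.rpow_const
        · exact continuous_const.add
            ((continuous_const.sub continuous_id).norm.pow 2 |>.div_const _)
        · intro y
          left
          positivity
      · exact Real.continuous_exp.comp ((continuous_norm.neg).div_const D₁)
    have hmono : ∀ y ∈ S, (1 + t) ^ (-α) * Bprofile (3/2) t ‖x - y‖ * Real.exp (-‖y‖ / D₁)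
        ≤ Kx * (1 + ‖y‖) ^ (-(4:ℝ)) := by
      intro y hy
      have hyS : ‖x - y‖ ≤ lam * t := hy
      have hv0 : (0:ℝ) ≤ ‖y‖ := norm_nonneg y
      have htri : r ≤ ‖x - y‖ + ‖y‖ := by
        rw [hrdef]
        calc ‖x‖ = ‖(x - y) + y‖ := by rw [sub_add_cancel]
          _ ≤ ‖x - y‖ + ‖y‖ := norm_add_le _ _
      have hvdp : dp ≤ ‖y‖ := by
        rw [hdpdef]; exact max_le (by linarith) hv0
      have hsplit : Real.exp (-‖y‖ / D₁)
          = Real.exp (-‖y‖/(2*D₁)) * Real.exp (-‖y‖/(2*D₁)) := by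
        rw [← Real.exp_add]; congr 1; field_simp; ring
      have h4 : Real.exp (-‖y‖/(2*D₁)) ≤ C₂ * (1 + ‖y‖) ^ (-(4:ℝ)) :=
        exp_le_mul_rpow hv0 hD₁ (hC₂ ‖y‖ hv0)
      have hCR0 : 0 ≤ C₂ * (1 + ‖y‖) ^ (-(4:ℝ)) :=
        mul_nonneg hC₂pos.le (Real.rpow_nonneg (by positivity) _)
      have key : Bprofile (3/2) t ‖x - y‖ * Real.exp (-‖y‖ / D₁)
          ≤ (8 * Bprofile (3/2) t r * Real.exp (-dp/(2*D₁)) + Real.exp (-r/(4*D₁)))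
            * (C₂ * (1 + ‖y‖) ^ (-(4:ℝ))) := by
        rw [hsplit, ← mul_assoc]
        rcases le_or_gt ‖y‖ (r/2) with hcase | hcase
        · have hBu : Bprofile (3/2) t ‖x - y‖ ≤ 8 * Bprofile (3/2) t r :=
            Bhalf ht hr0 (by linarith)
          have he1 : Real.exp (-‖y‖/(2*D₁)) ≤ Real.exp (-dp/(2*D₁)) :=
            Real.exp_le_exp.mpr ((div_le_div_iff_of_pos_right (by positivity)).mpr (by linarith))
          have t1 : Bprofile (3/2) t ‖x - y‖ * Real.exp (-‖y‖/(2*D₁))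
              ≤ 8 * Bprofile (3/2) t r * Real.exp (-dp/(2*D₁)) :=
            mul_le_mul hBu he1 (Real.exp_pos _).le (mul_nonneg (by norm_num) hBr.le)
          calc Bprofile (3/2) t ‖x - y‖ * Real.exp (-‖y‖/(2*D₁)) * Real.exp (-‖y‖/(2*D₁))
              ≤ (8 * Bprofile (3/2) t r * Real.exp (-dp/(2*D₁)))
                * (C₂ * (1 + ‖y‖) ^ (-(4:ℝ))) :=
                mul_le_mul t1 h4 (Real.exp_pos _).le
                  (mul_nonneg (mul_nonneg (by norm_num) hBr.le) (Real.exp_pos _).le)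
            _ ≤ _ := by
                apply mul_le_mul_of_nonneg_right _ hCR0
                exact le_add_of_nonneg_right (Real.exp_pos _).le
        · have hBu : Bprofile (3/2) t ‖x - y‖ ≤ 1 := Ble1 ht
          have he1 : Real.exp (-‖y‖/(2*D₁)) ≤ Real.exp (-r/(4*D₁)) := by
            apply Real.exp_le_exp.mpr
            rw [div_le_div_iff₀ (by positivity) (by positivity)]
            nlinarith [hD₁]
          have t1 : Bprofile (3/2) t ‖x - y‖ * Real.exp (-‖y‖/(2*D₁))
              ≤ Real.exp (-r/(4*D₁)) := by
            calc Bprofile (3/2) t ‖x - y‖ * Real.exp (-‖y‖/(2*D₁))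
                ≤ 1 * Real.exp (-r/(4*D₁)) :=
                  mul_le_mul hBu he1 (Real.exp_pos _).le zero_le_one
              _ = _ := one_mul _
          calc Bprofile (3/2) t ‖x - y‖ * Real.exp (-‖y‖/(2*D₁)) * Real.exp (-‖y‖/(2*D₁))
              ≤ Real.exp (-r/(4*D₁)) * (C₂ * (1 + ‖y‖) ^ (-(4:ℝ))) :=
                mul_le_mul t1 h4 (Real.exp_pos _).le (Real.exp_pos _).le
            _ ≤ _ := by
                apply mul_le_mul_of_nonneg_right _ hCR0
                exact le_add_of_nonneg_left (mul_nonneg (mul_nonneg (by norm_num) hBr.le)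
                  (Real.exp_pos _).le)
      calc (1 + t) ^ (-α) * Bprofile (3/2) t ‖x - y‖ * Real.exp (-‖y‖ / D₁)
          = (1 + t) ^ (-α) * (Bprofile (3/2) t ‖x - y‖ * Real.exp (-‖y‖ / D₁)) := by ring
        _ ≤ (1 + t) ^ (-α) * ((8 * Bprofile (3/2) t r * Real.exp (-dp/(2*D₁))
              + Real.exp (-r/(4*D₁))) * (C₂ * (1 + ‖y‖) ^ (-(4:ℝ)))) :=
            mul_le_mul_of_nonneg_left key hA0
        _ = Kx * (1 + ‖y‖) ^ (-(4:ℝ)) := by rw [hKxdef]; ring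
    have hg_int : Integrable (fun y : EuclideanSpace ℝ (Fin 3) =>
        Kx * (1 + ‖y‖) ^ (-(4:ℝ))) := hint.const_mul Kx
    have hf_int : IntegrableOn (fun y : EuclideanSpace ℝ (Fin 3) =>
        (1 + t) ^ (-α) * Bprofile (3/2) t ‖x - y‖ * Real.exp (-‖y‖ / D₁)) S := by
      apply Integrable.mono' hg_int.integrableOn hf_cont.aestronglyMeasurable.restrict
      rw [ae_restrict_iff' hSmeas]
      refine ae_of_all _ fun y hy => ?_
      rw [Real.norm_of_nonneg
        (mul_nonneg (mul_nonneg hA0 (Bpos ht).le) (Real.exp_pos _).le)]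
      exact hmono y hy
    calc (∫ y in S, (1 + t)^(-α) * Bprofile (3/2) t ‖x - y‖ * Real.exp (-‖y‖ / D₁))
        ≤ ∫ y in S, Kx * (1 + ‖y‖) ^ (-(4:ℝ)) :=
          setIntegral_mono_on hf_int hg_int.integrableOn hSmeas hmono
      _ ≤ ∫ y, Kx * (1 + ‖y‖) ^ (-(4:ℝ)) :=
          setIntegral_le_integral hg_int (ae_of_all _ fun y =>
            mul_nonneg hKx0 (Real.rpow_nonneg (by positivity) _))
      _ = Kx * M := by rw [hM]; exact integral_const_mul _ _

  have hA1 : (1 + t) ^ (-α) ≤ 1 :=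
    Real.rpow_le_one_of_one_le_of_nonpos hs1 (neg_nonpos.mpr hα)
  have hT1nn : 0 ≤ C * (1 + t) ^ (-α - 3/2) *
      Real.exp (-3 * (r - lam * t) ^ 2 / (2 * D₂ * (1 + t))) :=
    mul_nonneg (mul_nonneg hC0.le (Real.rpow_nonneg hs0.le _)) (Real.exp_pos _).le
  have hT2nn : 0 ≤ C * Real.exp (-3 * (r + t) / (2 * D₂)) :=
    mul_nonneg hC0.le (Real.exp_pos _).le
  have step2 : Kx * M ≤ (1 + t) ^ (-α) *
      (8 * Bprofile (3/2) t r * Real.exp (-dp/(2*D₁)) + Real.exp (-r/(4*D₁)))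
      * (C₂ * (M + 1)) := by
    calc Kx * M ≤ Kx * (M + 1) := mul_le_mul_of_nonneg_left (by linarith) hKx0
      _ = _ := by rw [hKxdef]; ring
  refine step1.trans (step2.trans ?_)
  have her : Real.exp (-r/(4*D₁)) ≤ C₁ * Bprofile (3/2) t r :=
    exp_le_mul_B ht hr0 hD₁ hC₁pos (hC₁ r hr0)
  by_cases hcone : r ≤ lam * t
  · rw [if_pos hcone]
    have hdp_eq : dp = 0 := by
      rw [hdpdef]; exact max_eq_right (by linarith)
    have h5 : 8 * Bprofile (3/2) t r * Real.exp (-dp/(2*D₁)) + Real.exp (-r/(4*D₁))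
        ≤ (9 + C₁ + 8 * c₀) * Bprofile (3/2) t r := by
      rw [hdp_eq]
      simp only [neg_zero, zero_div, Real.exp_zero]
      nlinarith [hBr, hc₀0, her]
    have key : (1 + t) ^ (-α) *
        (8 * Bprofile (3/2) t r * Real.exp (-dp/(2*D₁)) + Real.exp (-r/(4*D₁)))
        * (C₂ * (M + 1)) ≤ C * (1 + t) ^ (-α) * Bprofile (3/2) t r * 1 := by
      calc (1 + t) ^ (-α) *
          (8 * Bprofile (3/2) t r * Real.exp (-dp/(2*D₁)) + Real.exp (-r/(4*D₁)))
          * (C₂ * (M + 1))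
          ≤ (1 + t) ^ (-α) * ((9 + C₁ + 8 * c₀) * Bprofile (3/2) t r) * (C₂ * (M + 1)) :=
            mul_le_mul_of_nonneg_right (mul_le_mul_of_nonneg_left h5 hA0) hM''0.le
        _ = C * (1 + t) ^ (-α) * Bprofile (3/2) t r * 1 := by rw [hCdef]; ring
    linarith [hT1nn, hT2nn, key]
  · rw [if_neg hcone]
    push_neg at hcone
    have hd0 : 0 < r - lam * t := by linarith
    have hdp_eq : dp = r - lam * t := by
      rw [hdpdef]; exact max_eq_left (by linarith)
    have her2 : Real.exp (-r/(4*D₁)) ≤ Real.exp (-3 * (r + t) / (2 * D₂)) := by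
      apply Real.exp_le_exp.mpr
      rw [div_le_div_iff₀ (by positivity) (by positivity)]
      have hq : lam * (12 * D₁ * (r + t)) ≤ lam * (2 * D₂ * r) := by
        nlinarith [mul_le_mul_of_nonneg_right hF2 hr0,
          mul_le_mul_of_nonneg_left hcone.le (by positivity : (0:ℝ) ≤ 12 * D₁)]
      nlinarith [le_of_mul_le_mul_left hq hlam]
    have hMC : 9 * (C₂ * (M + 1)) ≤ C := by
      rw [hCdef]; nlinarith [hM''0, hC₁pos, hc₀0]
    by_cases hds : r - lam * t ≤ 1 + t
    · have hB2 : Bprofile (3/2) t r ≤ c₀ * (1 + t) ^ (-(3/2) : ℝ) := by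
        rw [hc₀]
        exact (Banti ht (by positivity) (by linarith)).trans (Bcone ht hlam)
      have he2 : Real.exp (-dp/(2*D₁))
          ≤ Real.exp (-3 * (r - lam * t) ^ 2 / (2 * D₂ * (1 + t))) := by
        rw [hdp_eq]
        apply Real.exp_le_exp.mpr
        rw [div_le_div_iff₀ (by positivity) (by positivity)]
        nlinarith [mul_le_mul_of_nonneg_left hds hd0.le,
          mul_le_mul_of_nonneg_right hF1 (mul_nonneg hd0.le hs0.le), hD₁.le, hd0.le]
      have hpow : (1 + t) ^ (-α) * (1 + t) ^ (-(3/2) : ℝ) = (1 + t) ^ (-α - 3/2) := by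
        rw [show -α - 3/2 = -α + (-(3/2) : ℝ) by ring, Real.rpow_add hs0]
      have piece1 : (1 + t) ^ (-α) * (8 * Bprofile (3/2) t r * Real.exp (-dp/(2*D₁)))
          * (C₂ * (M + 1))
          ≤ C * (1 + t) ^ (-α - 3/2) *
            Real.exp (-3 * (r - lam * t) ^ 2 / (2 * D₂ * (1 + t))) := by
        calc (1 + t) ^ (-α) * (8 * Bprofile (3/2) t r * Real.exp (-dp/(2*D₁)))
            * (C₂ * (M + 1))
            ≤ (1 + t) ^ (-α) * (8 * (c₀ * (1 + t) ^ (-(3/2) : ℝ)) *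
                Real.exp (-3 * (r - lam * t) ^ 2 / (2 * D₂ * (1 + t)))) * (C₂ * (M + 1)) := by
              apply mul_le_mul_of_nonneg_right _ hM''0.le
              apply mul_le_mul_of_nonneg_left _ hA0
              exact mul_le_mul (mul_le_mul_of_nonneg_left hB2 (by norm_num)) he2
                (Real.exp_pos _).le
                (mul_nonneg (by norm_num) (mul_nonneg hc₀0.le (Real.rpow_nonneg hs0.le _)))
          _ = 8 * c₀ * (C₂ * (M + 1)) * ((1 + t) ^ (-α - 3/2) *
                Real.exp (-3 * (r - lam * t) ^ 2 / (2 * D₂ * (1 + t)))) := by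
              rw [← hpow]; ring
          _ ≤ C * (1 + t) ^ (-α - 3/2) *
                Real.exp (-3 * (r - lam * t) ^ 2 / (2 * D₂ * (1 + t))) := by
              have hQE : 0 ≤ (1 + t) ^ (-α - 3/2) *
                  Real.exp (-3 * (r - lam * t) ^ 2 / (2 * D₂ * (1 + t))) :=
                mul_nonneg (Real.rpow_nonneg hs0.le _) (Real.exp_pos _).le
              rw [hCdef]
              nlinarith [mul_nonneg (mul_nonneg hM''0.le
                (by linarith : (0:ℝ) ≤ 9 + C₁)) hQE]
      have piece2 : (1 + t) ^ (-α) * Real.exp (-r/(4*D₁)) * (C₂ * (M + 1))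
          ≤ C * Real.exp (-3 * (r + t) / (2 * D₂)) := by
        calc (1 + t) ^ (-α) * Real.exp (-r/(4*D₁)) * (C₂ * (M + 1))
            ≤ 1 * Real.exp (-3 * (r + t) / (2 * D₂)) * (C₂ * (M + 1)) :=
              mul_le_mul_of_nonneg_right
                (mul_le_mul hA1 her2 (Real.exp_pos _).le zero_le_one) hM''0.le
          _ = (C₂ * (M + 1)) * Real.exp (-3 * (r + t) / (2 * D₂)) := by ring
          _ ≤ C * Real.exp (-3 * (r + t) / (2 * D₂)) :=
              mul_le_mul_of_nonneg_right (by linarith) (Real.exp_pos _).le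
      calc (1 + t) ^ (-α) *
          (8 * Bprofile (3/2) t r * Real.exp (-dp/(2*D₁)) + Real.exp (-r/(4*D₁)))
          * (C₂ * (M + 1))
          = (1 + t) ^ (-α) * (8 * Bprofile (3/2) t r * Real.exp (-dp/(2*D₁)))
              * (C₂ * (M + 1))
            + (1 + t) ^ (-α) * Real.exp (-r/(4*D₁)) * (C₂ * (M + 1)) := by ring
        _ ≤ C * (1 + t) ^ (-α - 3/2) *
              Real.exp (-3 * (r - lam * t) ^ 2 / (2 * D₂ * (1 + t)))
            + C * Real.exp (-3 * (r + t) / (2 * D₂)) := add_le_add piece1 piece2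
        _ ≤ _ := by linarith
    · push_neg at hds
      have he3 : Real.exp (-dp/(2*D₁)) ≤ Real.exp (-3 * (r + t) / (2 * D₂)) := by
        rw [hdp_eq]
        apply Real.exp_le_exp.mpr
        rw [div_le_div_iff₀ (by positivity) (by positivity)]
        have h8 : r + t ≤ (2 + lam) * (r - lam * t) := by
          nlinarith [mul_le_mul_of_nonneg_left
            (show t ≤ r - lam * t by linarith) hlam.le]
        nlinarith [mul_le_mul_of_nonneg_left h8 (by positivity : (0:ℝ) ≤ 6 * D₁),
          mul_le_mul_of_nonneg_right hF3 hd0.le]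
      have hsum2 : 8 * Bprofile (3/2) t r * Real.exp (-dp/(2*D₁)) + Real.exp (-r/(4*D₁))
          ≤ 9 * Real.exp (-3 * (r + t) / (2 * D₂)) := by
        have hBe : Bprofile (3/2) t r * Real.exp (-dp/(2*D₁))
            ≤ 1 * Real.exp (-3 * (r + t) / (2 * D₂)) :=
          mul_le_mul (Ble1 ht) he3 (Real.exp_pos _).le zero_le_one
        nlinarith [her2, hBe]
      calc (1 + t) ^ (-α) *
          (8 * Bprofile (3/2) t r * Real.exp (-dp/(2*D₁)) + Real.exp (-r/(4*D₁)))
          * (C₂ * (M + 1))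
          ≤ 1 * (9 * Real.exp (-3 * (r + t) / (2 * D₂))) * (C₂ * (M + 1)) :=
            mul_le_mul_of_nonneg_right (mul_le_mul hA1 hsum2 hsum0 zero_le_one) hM''0.le
        _ = 9 * (C₂ * (M + 1)) * Real.exp (-3 * (r + t) / (2 * D₂)) := by ring
        _ ≤ C * Real.exp (-3 * (r + t) / (2 * D₂)) :=
            mul_le_mul_of_nonneg_right hMC (Real.exp_pos _).le
        _ ≤ _ := by linarith
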